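/- arXiv:2409.15298 — 3 statements merged into one kernel-verified Lean document; each statement's English description precedes it below -/
import Mathlib

section
/- For all z ∈ ℝⁿ and all indices i, (1/(2√2)) · F₂(z)_i ≤ PTsoftmax(z)_i ≤ 2√2 · F₂(z)_i, where PTsoftmax(z)_i = 2^{⌈z_i⌉ - k} with k = ⌈log₂(∑_j 2^{z_j})⌉. -/
theorem ptsoftmax_approx_base2_softmax (n : ℕ) (hn : 1 ≤ n) (z : Fin n → ℝ)
    (k : ℤ) (hk : k = ⌈Real.logb 2 (∑ j, (2 : ℝ) ^ (z j))⌉)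
    (F PT : Fin n → ℝ)
    (hF : ∀ i, F i = (2 : ℝ) ^ (z i) / ∑ j, (2 : ℝ) ^ (z j))
    (hPT : ∀ i, PT i = (2 : ℝ) ^ (⌈z i⌉ - k)) :
    ∀ i, (1 / (2 * Real.sqrt 2)) * F i ≤ PT i ∧ PT i ≤ 2 * Real.sqrt 2 * F i := by
  intro i
  haveI : Nonempty (Fin n) := Fin.pos_iff_nonempty.mp hn
  set S := ∑ j, (2 : ℝ) ^ (z j) with hSdef
  have hS : 0 < S := Finset.sum_pos (fun j _ => by positivity) Finset.univ_nonempty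
  have h2 : (1 : ℝ) < 2 := one_lt_two
  have hkl : S ≤ (2 : ℝ) ^ (k : ℝ) := by
    have hle : Real.logb 2 S ≤ (k : ℝ) := by rw [hk]; exact Int.le_ceil _
    calc S = (2 : ℝ) ^ Real.logb 2 S := (Real.rpow_logb two_pos (by norm_num) hS).symm
      _ ≤ (2 : ℝ) ^ (k : ℝ) := Real.rpow_le_rpow_of_exponent_le h2.le hle
  have hku : (2 : ℝ) ^ (k : ℝ) ≤ 2 * S := by
    have hle : (k : ℝ) ≤ Real.logb 2 S + 1 := by
      rw [hk]; exact (Int.ceil_lt_add_one _).le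
    calc (2 : ℝ) ^ (k : ℝ) ≤ (2 : ℝ) ^ (Real.logb 2 S + 1) :=
          Real.rpow_le_rpow_of_exponent_le h2.le hle
      _ = (2 : ℝ) ^ Real.logb 2 S * (2 : ℝ) ^ (1 : ℝ) := Real.rpow_add two_pos _ _
      _ = 2 * S := by rw [Real.rpow_logb two_pos (by norm_num) hS, Real.rpow_one]; ring
  have hnl : (2 : ℝ) ^ (z i) ≤ (2 : ℝ) ^ ((⌈z i⌉ : ℝ)) :=
    Real.rpow_le_rpow_of_exponent_le h2.le (Int.le_ceil _)
  have hnu : (2 : ℝ) ^ ((⌈z i⌉ : ℝ)) ≤ 2 * (2 : ℝ) ^ (z i) := by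
    calc (2 : ℝ) ^ ((⌈z i⌉ : ℝ)) ≤ (2 : ℝ) ^ (z i + 1) :=
          Real.rpow_le_rpow_of_exponent_le h2.le (Int.ceil_lt_add_one _).le
      _ = (2 : ℝ) ^ (z i) * (2 : ℝ) ^ (1 : ℝ) := Real.rpow_add two_pos _ _
      _ = 2 * (2 : ℝ) ^ (z i) := by rw [Real.rpow_one]; ring
  have hPTi : PT i = (2 : ℝ) ^ ((⌈z i⌉ : ℝ)) / (2 : ℝ) ^ ((k : ℝ)) := by
    rw [hPT i, ← Real.rpow_intCast 2 (⌈z i⌉ - k), Int.cast_sub,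
      Real.rpow_sub two_pos]
  have hFi : F i = (2 : ℝ) ^ (z i) / S := hF i
  have hzpos : (0 : ℝ) < (2 : ℝ) ^ (z i) := by positivity
  have hkpos : (0 : ℝ) < (2 : ℝ) ^ ((k : ℝ)) := by positivity
  have hup : PT i ≤ 2 * F i := by
    rw [hPTi, hFi, mul_div_assoc']
    exact div_le_div₀ (by positivity) hnu hS hkl
  have hlo : F i / 2 ≤ PT i := by
    rw [hPTi, hFi, div_div]
    rw [show S * 2 = 2 * S by ring]
    exact div_le_div₀ (by positivity) hnl hkpos hku
  have hsq : (1 : ℝ) ≤ Real.sqrt 2 := by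
    rw [show (1 : ℝ) = Real.sqrt 1 from Real.sqrt_one.symm]
    exact Real.sqrt_le_sqrt one_le_two
  have hFnn : 0 ≤ F i := by rw [hFi]; positivity
  have hsqpos : (0 : ℝ) < Real.sqrt 2 := lt_of_lt_of_le one_pos hsq
  constructor
  · calc (1 / (2 * Real.sqrt 2)) * F i ≤ (1 / 2) * F i := by
          apply mul_le_mul_of_nonneg_right _ hFnn
          apply one_div_le_one_div_of_le two_pos
          nlinarith
      _ = F i / 2 := by ring
      _ ≤ PT i := hlo
  · calc PT i ≤ 2 * F i := hup
      _ ≤ 2 * Real.sqrt 2 * F i := by nlinarith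
end

section
/- For z ∈ ℝⁿ with k = ⌈log₂(∑_j 2^{z_j})⌉, the total mass of PTsoftmax satisfies 1/2 < ∑_i 2^{⌈z_i⌉ - k} < 4; in particular the PTsoftmax outputs sum to a quantity bounded by universal constants independent of n and z. -/
theorem ptsoftmax_mass_bounds (n : ℕ) (hn : 1 ≤ n) (z : Fin n → ℝ)
    (k : ℤ) (hk : k = ⌈Real.logb 2 (∑ j, (2 : ℝ) ^ (z j))⌉) :
    1 / 2 < ∑ i, (2 : ℝ) ^ (⌈z i⌉ - k) ∧ ∑ i, (2 : ℝ) ^ (⌈z i⌉ - k) < 4 := by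
  have h12 : (1:ℝ) < 2 := one_lt_two
  set S : ℝ := ∑ j, (2 : ℝ) ^ (z j) with hS
  have hne : (Finset.univ : Finset (Fin n)).Nonempty := by
    simpa [Finset.univ_nonempty_iff] using Fin.pos_iff_nonempty.mp hn
  have hSpos : 0 < S :=
    Finset.sum_pos (fun j _ => Real.rpow_pos_of_pos two_pos _) hne
  have hSle : S ≤ (2:ℝ) ^ ((k:ℝ)) := by
    have : S = (2:ℝ) ^ (Real.logb 2 S) := (Real.rpow_logb two_pos (by norm_num) hSpos).symm
    rw [this]
    apply Real.rpow_le_rpow_left_iff h12 |>.mpr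
    rw [hk]; exact_mod_cast Int.le_ceil _
  have hSgt : (2:ℝ) ^ ((k:ℝ) - 1) < S := by
    have h1 : (k:ℝ) - 1 < Real.logb 2 S := by
      rw [hk]
      have := Int.ceil_lt_add_one (Real.logb 2 S)
      push_cast
      linarith [this]
    have : (2:ℝ) ^ ((k:ℝ) - 1) < (2:ℝ) ^ (Real.logb 2 S) :=
      Real.rpow_lt_rpow_left_iff h12 |>.mpr h1
    rwa [Real.rpow_logb two_pos (by norm_num) hSpos] at this
  -- rewrite sum as rpow
  have key : ∑ i, (2 : ℝ) ^ (⌈z i⌉ - k) =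
      (∑ i, (2:ℝ) ^ ((⌈z i⌉ : ℝ))) * (2:ℝ) ^ (-(k:ℝ)) := by
    rw [Finset.sum_mul]
    refine Finset.sum_congr rfl fun i _ => ?_
    rw [← Real.rpow_intCast 2 (⌈z i⌉ - k), ← Real.rpow_add two_pos]
    push_cast
    ring_nf
  have hA : S ≤ ∑ i, (2:ℝ) ^ ((⌈z i⌉ : ℝ)) := by
    apply Finset.sum_le_sum
    intro i _
    exact Real.rpow_le_rpow_left_iff h12 |>.mpr (Int.le_ceil _)
  have hB : ∑ i, (2:ℝ) ^ ((⌈z i⌉ : ℝ)) < 2 * S := by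
    rw [Finset.mul_sum]
    apply Finset.sum_lt_sum_of_nonempty hne
    intro i _
    have h1 : ((⌈z i⌉ : ℝ)) < z i + 1 := Int.ceil_lt_add_one _
    have : (2:ℝ) ^ ((⌈z i⌉ : ℝ)) < (2:ℝ) ^ (z i + 1) :=
      Real.rpow_lt_rpow_left_iff h12 |>.mpr h1
    calc (2:ℝ) ^ ((⌈z i⌉ : ℝ)) < (2:ℝ) ^ (z i + 1) := this
      _ = 2 * (2:ℝ) ^ (z i) := by
          rw [Real.rpow_add two_pos, Real.rpow_one]; ring
  have hpos : (0:ℝ) < (2:ℝ) ^ (-(k:ℝ)) := Real.rpow_pos_of_pos two_pos _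
  constructor
  · rw [key]
    have h1 : (2:ℝ) ^ ((k:ℝ) - 1) * (2:ℝ) ^ (-(k:ℝ)) < S * (2:ℝ) ^ (-(k:ℝ)) :=
      mul_lt_mul_of_pos_right hSgt hpos
    have h2 : S * (2:ℝ) ^ (-(k:ℝ)) ≤ (∑ i, (2:ℝ) ^ ((⌈z i⌉ : ℝ))) * (2:ℝ) ^ (-(k:ℝ)) :=
      mul_le_mul_of_nonneg_right hA hpos.le
    have h3 : (2:ℝ) ^ ((k:ℝ) - 1) * (2:ℝ) ^ (-(k:ℝ)) = 1/2 := by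
      rw [← Real.rpow_add two_pos]
      have he : (k:ℝ) - 1 + -(k:ℝ) = -1 := by ring
      rw [he, Real.rpow_neg_one]
      norm_num
    linarith
  · rw [key]
    have h1 : (∑ i, (2:ℝ) ^ ((⌈z i⌉ : ℝ))) * (2:ℝ) ^ (-(k:ℝ)) <
        (2 * S) * (2:ℝ) ^ (-(k:ℝ)) := mul_lt_mul_of_pos_right hB hpos
    have h2 : (2 * S) * (2:ℝ) ^ (-(k:ℝ)) ≤ (2 * (2:ℝ) ^ ((k:ℝ))) * (2:ℝ) ^ (-(k:ℝ)) := by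
      apply mul_le_mul_of_nonneg_right _ hpos.le
      linarith
    have h3 : (2 * (2:ℝ) ^ ((k:ℝ))) * (2:ℝ) ^ (-(k:ℝ)) = 2 := by
      rw [mul_assoc, ← Real.rpow_add two_pos]
      norm_num
    linarith
end

section
/- For the maximum-logit index i* = argmax_i z_i of z ∈ ℝⁿ, PTsoftmax(z)_{i*} = 2^{⌈z_{i*}⌉ − k} ≥ 1/(4n); i.e., the approximate softmax assigns the top logit at least probability 1/(4n). -/
theorem ptsoftmax_argmax_lower_bound (n : ℕ) (hn : 1 ≤ n) (z : Fin n → ℝ)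
    (k : ℤ) (hk : k = ⌈Real.logb 2 (∑ j, (2 : ℝ) ^ (z j))⌉)
    (i : Fin n) (hi : ∀ j, z j ≤ z i) :
    (1 : ℝ) / (4 * n) ≤ (2 : ℝ) ^ (⌈z i⌉ - k) := by
  set S : ℝ := ∑ j, (2 : ℝ) ^ (z j) with hS
  have hSpos : 0 < S := by
    apply Finset.sum_pos
    · intro j _; positivity
    · exact Finset.univ_nonempty_iff.mpr ⟨i⟩
  have hnpos : (0 : ℝ) < n := by exact_mod_cast hn
  -- S ≤ n * 2^(z i)
  have h1 : S ≤ n * (2 : ℝ) ^ (z i) := by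
    rw [hS]
    calc ∑ j, (2 : ℝ) ^ (z j) ≤ ∑ _j : Fin n, (2 : ℝ) ^ (z i) := by
          apply Finset.sum_le_sum
          intro j _
          exact Real.rpow_le_rpow_of_exponent_le (by norm_num) (hi j)
      _ = n * (2 : ℝ) ^ (z i) := by simp [Finset.sum_const, mul_comm]
  -- 2^(z i) ≤ 2^⌈z i⌉
  have h2 : (2 : ℝ) ^ (z i) ≤ (2 : ℝ) ^ ((⌈z i⌉ : ℤ) : ℝ) :=
    Real.rpow_le_rpow_of_exponent_le (by norm_num) (Int.le_ceil _)
  -- 2^k ≤ 2 * S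
  have h3 : (2 : ℝ) ^ ((k : ℤ) : ℝ) ≤ 2 * S := by
    have hk' : ((k : ℤ) : ℝ) ≤ Real.logb 2 S + 1 := by
      rw [hk]
      have := Int.ceil_lt_add_one (Real.logb 2 S)
      exact_mod_cast this.le
    calc (2 : ℝ) ^ ((k : ℤ) : ℝ) ≤ (2 : ℝ) ^ (Real.logb 2 S + 1) :=
          Real.rpow_le_rpow_of_exponent_le (by norm_num) hk'
      _ = (2 : ℝ) ^ (Real.logb 2 S) * 2 := by
          rw [Real.rpow_add (by norm_num : (0:ℝ) < 2)]; norm_num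
      _ = 2 * S := by
          rw [Real.rpow_logb (by norm_num) (by norm_num) hSpos]; ring
  have hkpow_pos : (0 : ℝ) < (2 : ℝ) ^ ((k : ℤ) : ℝ) := Real.rpow_pos_of_pos (by norm_num) _
  have key : (1 : ℝ) / (4 * n) ≤ (2 : ℝ) ^ ((⌈z i⌉ : ℤ) : ℝ) / (2 : ℝ) ^ ((k : ℤ) : ℝ) := by
    have hnum : S / n ≤ (2 : ℝ) ^ ((⌈z i⌉ : ℤ) : ℝ) := by
      rw [div_le_iff₀ hnpos]
      calc S ≤ n * (2 : ℝ) ^ (z i) := h1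
        _ ≤ n * (2 : ℝ) ^ ((⌈z i⌉ : ℤ) : ℝ) := by nlinarith
        _ = (2 : ℝ) ^ ((⌈z i⌉ : ℤ) : ℝ) * n := by ring
    calc (1 : ℝ) / (4 * n) ≤ (S / n) / (2 * S) := by
          rw [div_le_div_iff₀ (by positivity) (by positivity), div_mul_eq_mul_div,
            le_div_iff₀ hnpos]
          nlinarith
      _ ≤ (2 : ℝ) ^ ((⌈z i⌉ : ℤ) : ℝ) / (2 : ℝ) ^ ((k : ℤ) : ℝ) :=
          div_le_div₀ (by positivity) hnum hkpow_pos h3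
  calc (1 : ℝ) / (4 * n) ≤ (2 : ℝ) ^ ((⌈z i⌉ : ℤ) : ℝ) / (2 : ℝ) ^ ((k : ℤ) : ℝ) := key
    _ = (2 : ℝ) ^ (⌈z i⌉ - k) := by
        rw [← Real.rpow_sub (by norm_num : (0:ℝ) < 2)]
        rw [← Real.rpow_intCast 2 (⌈z i⌉ - k)]
        push_cast
        ring_nf
end
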